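/- For every n ≥ 4 there exist c ∈ F_{2^n} with c ≠ 0, c ≠ 1, and a, b ∈ F_{2^n} such that the c-DDT entry of the (0,1)-swapped inverse function satisfies Δ_c(a,b) = 4; that is, the upper bound 4 on the c-differential uniformity of G is attained. -/

import Mathlib

open Finset

/-- The (0,1)-swapped inverse function on a field of characteristic 2 with `2^n` elements:
`G(x) = x^(2^n-2) + x^(2^n-1) + (x+1)^(2^n-1)`. -/
def swappedInv {F : Type*} [Field F] (n : ℕ) (x : F) : F :=
  x ^ (2 ^ n - 2) + x ^ (2 ^ n - 1) + (x + 1) ^ (2 ^ n - 1)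

/-- The `c`-DDT entry of the swapped inverse function at `(a, b)`:
the number of `x` with `G(x+a) + c·G(x) = b`. -/
def cDDT (F : Type*) [Field F] [Fintype F] [DecidableEq F] (n : ℕ) (c a b : F) : ℕ :=
  (univ.filter (fun x : F => swappedInv n (x + a) + c * swappedInv n x = b)).card

/-- The `c`-BCT entry of the swapped inverse function at `(a, b)`:
the number of pairs `(x, γ)` with `G(x+γ) + c·G(x) = b` and `G(x+γ+a) + c⁻¹·G(x+a) = b`. -/
def cBCT (F : Type*) [Field F] [Fintype F] [DecidableEq F] (n : ℕ) (c a b : F) : ℕ :=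
  (univ.filter (fun p : F × F =>
    swappedInv n (p.1 + p.2) + c * swappedInv n p.1 = b ∧
    swappedInv n (p.1 + p.2 + a) + c⁻¹ * swappedInv n (p.1 + a) = b)).card

/-- The absolute trace map on a field with `2^n` elements: `Tr(x) = ∑_{i=0}^{n-1} x^(2^i)`. -/
def trF {F : Type*} [Field F] (n : ℕ) (x : F) : F :=
  ∑ i ∈ Finset.range n, x ^ (2 ^ i)

lemma myswap_zero {F : Type*} [Field F] {n : ℕ} (hn : 2 ≤ n) : swappedInv n (0 : F) = 1 := by
  unfold swappedInv
  have h1 : 2^n - 2 ≠ 0 := by have : 2^2 ≤ 2^n := Nat.pow_le_pow_right (by norm_num) hn; omega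
  have h2 : 2^n - 1 ≠ 0 := by have : 2^2 ≤ 2^n := Nat.pow_le_pow_right (by norm_num) hn; omega
  rw [zero_pow h1, zero_pow h2]
  simp

lemma myswap_one {F : Type*} [Field F] {n : ℕ} (hn : 2 ≤ n) (h2 : (2 : F) = 0) :
    swappedInv n (1 : F) = 0 := by
  unfold swappedInv
  have hne : 2^n - 1 ≠ 0 := by have : 2^2 ≤ 2^n := Nat.pow_le_pow_right (by norm_num) hn; omega
  rw [one_pow, one_pow, show (1 : F) + 1 = 0 by linear_combination h2, zero_pow hne]
  norm_num

lemma myswap_inv {F : Type*} [Field F] [Fintype F] {n : ℕ} (hF : Fintype.card F = 2 ^ n)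
    (h2 : (2 : F) = 0) {x : F} (h0 : x ≠ 0) (h1 : x ≠ 1) : swappedInv n x = x⁻¹ := by
  have hx1 : x + 1 ≠ 0 := by intro h; apply h1; linear_combination h - h2
  have hq : 2 ≤ Fintype.card F := Fintype.one_lt_card
  unfold swappedInv
  rw [← hF]
  have e1 : x ^ (Fintype.card F - 1) = 1 := FiniteField.pow_card_sub_one_eq_one x h0
  have e2 : (x + 1) ^ (Fintype.card F - 1) = 1 := FiniteField.pow_card_sub_one_eq_one _ hx1
  have e3 : x ^ (Fintype.card F - 2) = x⁻¹ := by
    have hmul : x ^ (Fintype.card F - 2) * x = 1 := by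
      rw [← pow_succ, show Fintype.card F - 2 + 1 = Fintype.card F - 1 by omega]
      exact e1
    exact eq_inv_of_mul_eq_one_left hmul
  rw [e1, e2, e3]
  linear_combination h2

theorem stmt_5 (n : ℕ) (hn : 4 ≤ n) (F : Type*) [Field F] [Fintype F] [DecidableEq F]
    (hF : Fintype.card F = 2 ^ n) :
    ∃ c a b : F, c ≠ 0 ∧ c ≠ 1 ∧ cDDT F n c a b = 4 := by
  have hn2 : 2 ≤ n := by omega
  have hcard : 16 ≤ Fintype.card F := by
    rw [hF]
    calc (16 : ℕ) = 2 ^ 4 := by norm_num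
    _ ≤ 2 ^ n := Nat.pow_le_pow_right (by norm_num) hn
  haveI hchar : CharP F 2 := by
    apply ringChar.of_eq
    rw [FiniteField.even_card_iff_char_two, hF]
    have : 2 ∣ 2 ^ n := dvd_pow_self 2 (by omega)
    omega
  have h2 : (2 : F) = 0 := by exact_mod_cast CharP.cast_eq_zero F 2
  -- find r avoiding the bad roots
  obtain ⟨r, hr⟩ : ∃ r : F, r * (r+1) * (r^2+r+1) * (r^3+r+1) * (r^3+r^2+1) *
      (r^4+r^3+r^2+r+1) ≠ 0 := by
    classical
    set P : Polynomial F := Polynomial.X * (Polynomial.X + 1) *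
      (Polynomial.X^2 + Polynomial.X + 1) * (Polynomial.X^3 + Polynomial.X + 1) *
      (Polynomial.X^3 + Polynomial.X^2 + 1) *
      (Polynomial.X^4 + Polynomial.X^3 + Polynomial.X^2 + Polynomial.X + 1) with hP
    have hmon : P.Monic := by
      rw [hP]; monicity!
    have hdeg : P.natDegree = 14 := by
      rw [hP]; compute_degree!
    obtain ⟨r, hr⟩ := P.exists_eval_ne_zero_of_natDegree_lt_card hmon.ne_zero
      (by rw [hdeg, Cardinal.mk_fintype, hF]
          exact_mod_cast (by omega : 14 < 2 ^ n))
    refine ⟨r, ?_⟩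
    simpa [hP] using hr
  rw [mul_ne_zero_iff, mul_ne_zero_iff, mul_ne_zero_iff, mul_ne_zero_iff, mul_ne_zero_iff] at hr
  obtain ⟨⟨⟨⟨⟨hr0, hr1⟩, hs⟩, h31⟩, h32⟩, h5⟩ := hr
  have hr_ne_1 : r ≠ 1 := by intro h; apply hr1; rw [h]; linear_combination h2
  have hrinv0 : r⁻¹ ≠ 0 := inv_ne_zero hr0
  have hrinv1 : r⁻¹ ≠ 1 := fun h => hr_ne_1 (inv_eq_one.mp h)
  have hr_ne_inv : r ≠ r⁻¹ := by
    intro h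
    have hrr : r * r = 1 := by nth_rewrite 2 [h]; exact mul_inv_cancel₀ hr0
    apply hr1
    have hsq : (r+1)^2 = 0 := by linear_combination hrr + r * h2 + h2
    exact pow_eq_zero_iff (by norm_num) |>.mp hsq
  -- the chosen parameters
  set a : F := r / (r^2+r+1) with ha_def
  set b : F := (r^2+r+1) / (r+1)^2 with hb_def
  set c : F := (r^2+r+1)^2 / (r * (r+1)^2) with hc_def
  have ha0 : a ≠ 0 := by rw [ha_def]; exact div_ne_zero hr0 hs
  have ha1 : a ≠ 1 := by
    rw [ha_def]; intro h
    rw [div_eq_one_iff_eq hs] at h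
    apply hr1
    have hsq : (r+1)^2 = 0 := by linear_combination -h + r*h2
    exact pow_eq_zero_iff (by norm_num) |>.mp hsq
  have ha1' : a + 1 ≠ 0 := by
    intro h; apply ha1; linear_combination h - h2
  have ha1'' : a + 1 ≠ 1 := by
    intro h; apply ha0; linear_combination h
  have hc0 : c ≠ 0 := by
    rw [hc_def]; exact div_ne_zero (pow_ne_zero _ hs) (mul_ne_zero hr0 (pow_ne_zero _ hr1))
  have hc1 : c ≠ 1 := by
    rw [hc_def]; intro h
    rw [div_eq_one_iff_eq (mul_ne_zero hr0 (pow_ne_zero _ hr1))] at h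
    exact h5 (by linear_combination h)
  have hb0 : b ≠ 0 := by
    rw [hb_def]; exact div_ne_zero hs (pow_ne_zero _ hr1)
  -- a, a+1 are not in {0,1,r,r⁻¹}
  have ha_ne_r : a ≠ r := by
    rw [ha_def]; intro h
    rw [div_eq_iff hs] at h
    have h' : (1:F) = r^2+r+1 := mul_left_cancel₀ hr0 (by linear_combination h)
    exact mul_ne_zero hr0 hr1 (by linear_combination -h')
  have ha_ne_rinv : a ≠ r⁻¹ := by
    rw [ha_def]; intro h
    rw [div_eq_iff hs, inv_mul_eq_div, eq_div_iff hr0] at h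
    exact hr1 (by linear_combination -h)
  have ha1_ne_r : a + 1 ≠ r := by
    intro h
    have h' : r + (r^2+r+1) = r * (r^2+r+1) := by
      have := congrArg (· * (r^2+r+1)) h
      simpa [ha_def, add_mul, div_mul_cancel₀ _ hs] using this
    exact h31 (by linear_combination -h' + r*h2 + h2)
  have ha1_ne_rinv : a + 1 ≠ r⁻¹ := by
    intro h
    have hh : (a + 1) * r = 1 := by rw [h, inv_mul_cancel₀ hr0]
    rw [ha_def] at hh
    rw [div_add_one hs, div_mul_eq_mul_div, div_eq_one_iff_eq hs] at hh
    exact h32 (by linear_combination hh + h2)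
  -- key identities for the chosen a,b,c
  have hid0 : a⁻¹ + c = b := by
    rw [ha_def, hb_def, hc_def]
    rw [inv_div]
    field_simp
    linear_combination (r^2+r+1)^2 * h2
  have hid1 : (1 + a)⁻¹ = b := by
    rw [ha_def, hb_def]
    rw [show 1 + r/(r^2+r+1) = (r+1)^2/(r^2+r+1) by rw [one_add_div hs]; ring, inv_div]
  have hid_a : (1 : F) + c * a⁻¹ ≠ b := by
    intro h
    rw [ha_def, hb_def, hc_def, inv_div] at h
    field_simp at h
    have hz : (r+1)^4 * (r^4+r^3+r^2+r+1) = 0 := by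
      linear_combination (r+1)^2 * h + (- r^2 - 4*r^3 - 6*r^4 - 4*r^5 - r^6) * h2
    rcases mul_eq_zero.mp hz with h' | h'
    · exact hr1 (pow_eq_zero_iff (by norm_num) |>.mp h')
    · exact h5 h'
  have hid_a1 : c * (a+1)⁻¹ ≠ b := by
    intro h
    apply hc1
    rw [← hid1] at h
    have h' : c * (a+1)⁻¹ * (a+1) = (1+a)⁻¹ * (a+1) := by rw [h]
    rw [mul_assoc, inv_mul_cancel₀ ha1', mul_one] at h'
    rw [h', show (1:F) + a = a + 1 by ring, inv_mul_cancel₀ ha1']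
  have hxa_ne : ∀ x : F, x ≠ a → x + a ≠ 0 := by
    intro x hx h
    exact hx (by linear_combination h - a * h2)
  have hfac : ∀ x : F, x ≠ 0 → x ≠ a → ((x+a)⁻¹ + c * x⁻¹ = b ↔ (x = r ∨ x = r⁻¹)) := by
    intro x hx0 hxa
    have hxa0 : x + a ≠ 0 := hxa_ne x hxa
    have hne : x * (x + a) ≠ 0 := mul_ne_zero hx0 hxa0
    rw [← mul_left_inj' hne]
    have expand : ((x+a)⁻¹ + c * x⁻¹) * (x * (x+a)) = x + c * (x+a) := by
      have e1 := inv_mul_cancel₀ hxa0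
      have e2 := inv_mul_cancel₀ hx0
      calc ((x+a)⁻¹ + c * x⁻¹) * (x * (x+a))
          = ((x+a)⁻¹*(x+a)) * x + c * (x⁻¹*x) * (x+a) := by ring
        _ = x + c * (x+a) := by rw [e1, e2]; ring
    rw [expand]
    have hA : a * (r^2+r+1) = r := by rw [ha_def, div_mul_cancel₀ _ hs]
    have hB : b * ((r+1)^2) = r^2+r+1 := by rw [hb_def, div_mul_cancel₀ _ (pow_ne_zero 2 hr1)]
    have hC : c * (r * (r+1)^2) = (r^2+r+1)^2 := by
      rw [hc_def, div_mul_cancel₀ _ (mul_ne_zero hr0 (pow_ne_zero 2 hr1))]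
    have hpoly : r * (x + c*(x+a)) + r * (b * (x*(x+a))) = b*(x+r)*(x*r+1) := by
      have hD : (r^2+r+1) * ((r+1)^2 * (r * (r+1)^2)) ≠ 0 :=
        mul_ne_zero hs (mul_ne_zero (pow_ne_zero _ hr1) (mul_ne_zero hr0 (pow_ne_zero _ hr1)))
      refine mul_left_cancel₀ hD ?_
      linear_combination (r + 4*r^2 + r^2*x + 8*r^3 + 3*r^3*x + 10*r^4 + 4*r^4*x + 8*r^5 + 3*r^5*x + 4*r^6 + r^6*x + r^7) * hA + (- r*x - r^2 - 3*r^2*x - 3*r^3 - 5*r^3*x - 4*r^4 - 6*r^4*x - 3*r^5 - 5*r^5*x - r^6 - 3*r^6*x - r^7*x + a*r^2*x + 3*a*r^3*x + 4*a*r^4*x + 3*a*r^5*x + a*r^6*x) * hB + (r*x + 3*r^2*x + 4*r^3*x + 3*r^4*x + r^5*x + a*r + 3*a*r^2 + 4*a*r^3 + 3*a*r^4 + a*r^5) * hC + (r^2*x + 5*r^3*x + 11*r^4*x + 14*r^5*x + 11*r^6*x + 5*r^7*x + r^8*x) * h2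
    constructor
    · intro h
      have hz : b*(x+r)*(x*r+1) = 0 := by
        rw [← hpoly]
        linear_combination r * h + r * b * (x*(x+a)) * h2
      rcases mul_eq_zero.mp hz with hz1 | hz4
      · rcases mul_eq_zero.mp hz1 with hz2 | hz3
        · exact absurd hz2 hb0
        · exact Or.inl (by linear_combination hz3 - r * h2)
      · refine Or.inr (eq_inv_of_mul_eq_one_left ?_)
        linear_combination hz4 - h2
    · intro h
      have hz : b*(x+r)*(x*r+1) = 0 := by
        rcases h with h | h
        · rw [h, show r + r = 2 * r by ring, h2, zero_mul, mul_zero, zero_mul]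
        · rw [h, inv_mul_cancel₀ hr0, show (1:F) + 1 = 2 by ring, h2, mul_zero]
      rw [← hpoly] at hz
      have h0 : r * ((x + c*(x+a)) + b*(x*(x+a))) = 0 := by linear_combination hz
      have h1 := (mul_eq_zero.mp h0).resolve_left hr0
      linear_combination h1 - b * (x*(x+a)) * h2
  -- main characterization
  have key : ∀ x : F, (swappedInv n (x + a) + c * swappedInv n x = b) ↔
      (x = 0 ∨ x = 1 ∨ x = r ∨ x = r⁻¹) := by
    intro x
    by_cases hx0 : x = 0
    · subst hx0
      rw [zero_add, myswap_zero hn2, myswap_inv hF h2 ha0 ha1, mul_one]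
      simp [hid0]
    by_cases hx1 : x = 1
    · subst hx1
      rw [myswap_one hn2 h2, mul_zero, add_zero,
        myswap_inv hF h2 (by rw [add_comm]; exact ha1') (by
          intro h; apply ha0; linear_combination h)]
      exact iff_of_true hid1 (Or.inr (Or.inl rfl))
    by_cases hxa : x = a
    · subst hxa
      rw [show a + a = 0 by linear_combination a * h2, myswap_zero hn2,
        myswap_inv hF h2 ha0 ha1]
      simp only [iff_false, ha0, ha1, ha_ne_r, ha_ne_rinv, or_self, or_false]
      exact hid_a
    by_cases hxa1 : x = a + 1
    · subst hxa1
      rw [show a + 1 + a = 1 by linear_combination a * h2, myswap_one hn2 h2,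
        myswap_inv hF h2 ha1' ha1'', zero_add]
      simp only [iff_false, ha1', ha1'', ha1_ne_r, ha1_ne_rinv, or_self, or_false]
      exact hid_a1
    · have hxa0 : x + a ≠ 0 := hxa_ne x hxa
      have hxa1' : x + a ≠ 1 := by
        intro h; exact hxa1 (by linear_combination h - a * h2)
      rw [myswap_inv hF h2 hxa0 hxa1', myswap_inv hF h2 hx0 hx1]
      rw [hfac x hx0 hxa]
      simp [hx0, hx1]
  refine ⟨c, a, b, hc0, hc1, ?_⟩
  have hset : (univ.filter (fun x : F => swappedInv n (x + a) + c * swappedInv n x = b)) =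
      ({0, 1, r, r⁻¹} : Finset F) := by
    ext x
    simp only [mem_filter, mem_univ, true_and, mem_insert, mem_singleton]
    exact key x
  rw [cDDT, hset]
  rw [card_insert_of_notMem (by
      simp only [mem_insert, mem_singleton]
      push_neg
      exact ⟨zero_ne_one, fun h => hr0 h.symm, fun h => hrinv0 h.symm⟩),
    card_insert_of_notMem (by
      simp only [mem_insert, mem_singleton]
      push_neg
      exact ⟨fun h => hr_ne_1 h.symm, fun h => hrinv1 h.symm⟩),
    card_insert_of_notMem (by
      simp only [mem_singleton]
      exact hr_ne_inv),
    card_singleton]
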